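/- arXiv:2406.05117 — 4 statements merged into one kernel-verified Lean document; each statement's English description precedes it below -/
import Mathlib

section
/- On the space H_p, the expression ‖x‖_{H_p} = Σ_{k,l=1}^∞ kl|Δx_{k,l}| + lim_{N→∞} (sup_{k,l ≥ N} |x_{k,l}|) is a well-defined seminorm (the limit exists and is finite for every x ∈ H_p), and H_p is complete with respect to this seminorm: every sequence in H_p that is Cauchy for ‖·‖_{H_p} converges in the seminorm to an element of H_p. -/
open Filter Topology

noncomputable section

/-- The set `Ω` of all complex double sequences (0-indexed: entry `x k l`
corresponds to the paper's `x_{k+1,l+1}`). -/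
abbrev DSeq : Type := ℕ → ℕ → ℂ

/-- The double (forward) difference operator `Δ`. -/
def dDiff (x : DSeq) (k l : ℕ) : ℂ :=
  x k l - x (k + 1) l - x k (l + 1) + x (k + 1) (l + 1)

/-- Pringsheim (p-) convergence of a double sequence to `L`. -/
def PConv (x : DSeq) (L : ℂ) : Prop :=
  ∀ ε > (0 : ℝ), ∃ N : ℕ, ∀ k ≥ N, ∀ l ≥ N, ‖x k l - L‖ < ε

/-- Boundedness of a double sequence. -/
def DBounded (x : DSeq) : Prop :=
  ∃ M : ℝ, ∀ k l : ℕ, ‖x k l‖ ≤ M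

/-- bp-convergence: bounded Pringsheim convergence. -/
def BPConv (x : DSeq) (L : ℂ) : Prop := PConv x L ∧ DBounded x

/-- r-convergence (regular convergence). -/
def RConv (x : DSeq) (L : ℂ) : Prop :=
  PConv x L ∧ (∀ k : ℕ, ∃ c : ℂ, Tendsto (fun l => x k l) atTop (nhds c)) ∧
    (∀ l : ℕ, ∃ c : ℂ, Tendsto (fun k => x k l) atTop (nhds c))

/-- The three convergence notions ϑ ∈ {p, bp, r}. -/
inductive Theta | p | bp | r

/-- ϑ-convergence. -/
def ThConv : Theta → DSeq → ℂ → Prop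
  | Theta.p => PConv
  | Theta.bp => BPConv
  | Theta.r => RConv

/-- `Σ_{k,l} kl |Δx_{k,l}| < ∞` (0-indexed, so the weight is `(k+1)(l+1)`). -/
def HahnSummable (x : DSeq) : Prop :=
  Summable (fun kl : ℕ × ℕ =>
    (((kl.1 + 1) * (kl.2 + 1) : ℕ) : ℝ) * ‖dDiff x kl.1 kl.2‖)

/-- The Hahn double sequence space `H_ϑ`. -/
def Hahn (θ : Theta) : Set DSeq := {x | HahnSummable x ∧ ThConv θ x 0}

/-- `‖x‖_H = Σ_{k,l} kl |Δx_{k,l}|`. -/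
def hNorm (x : DSeq) : ℝ :=
  ∑' kl : ℕ × ℕ, (((kl.1 + 1) * (kl.2 + 1) : ℕ) : ℝ) * ‖dDiff x kl.1 kl.2‖

/-- Rectangular partial sums of the products `a_{k,l} x_{k,l}`. -/
def pSum (a x : DSeq) (m n : ℕ) : ℂ :=
  ∑ k ∈ Finset.range (m + 1), ∑ l ∈ Finset.range (n + 1), a k l * x k l

/-- Rectangular partial sums of `a`. -/
def rectSum (a : DSeq) (m n : ℕ) : ℂ :=
  ∑ k ∈ Finset.range (m + 1), ∑ l ∈ Finset.range (n + 1), a k l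

/-- The space `P_∞`: `sup_{m,n} (1/(mn)) |Σ_{k≤m,l≤n} a_{k,l}| < ∞`. -/
def Pinf (a : DSeq) : Prop :=
  ∃ C : ℝ, ∀ m n : ℕ,
    (1 / (((m : ℝ) + 1) * ((n : ℝ) + 1))) * ‖rectSum a m n‖ ≤ C

/-- `L_u`: absolutely summable double sequences. -/
def Lu : Set DSeq := {x | Summable (fun kl : ℕ × ℕ => ‖x kl.1 kl.2‖)}

/-- `M_u`: bounded double sequences. -/
def Mu : Set DSeq := {x | DBounded x}

/-- `C_bp`: bp-convergent double sequences. -/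
def Cbp : Set DSeq := {x | ∃ L : ℂ, BPConv x L}

/-- The integrated space `∫L_u = {x : Σ_{k,l} kl |x_{k,l}| < ∞}`. -/
def intLu : Set DSeq :=
  {x | Summable (fun kl : ℕ × ℕ =>
    (((kl.1 + 1) * (kl.2 + 1) : ℕ) : ℝ) * ‖x kl.1 kl.2‖)}

/-- `BV`: double sequences of bounded variation. -/
def BVset : Set DSeq :=
  {x | Summable (fun kl : ℕ × ℕ => ‖dDiff x kl.1 kl.2‖)}

/-- The rectangular section `x^{[m,n]}`. -/
def sect (x : DSeq) (m n : ℕ) : DSeq :=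
  fun k l => if k ≤ m ∧ l ≤ n then x k l else 0

/-- `sup_{k,l ≥ N} |x_{k,l}|` valued in `ℝ≥0∞`. -/
def supTail (x : DSeq) (N : ℕ) : ENNReal :=
  ⨆ k : ℕ, ⨆ l : ℕ, if N ≤ k ∧ N ≤ l then (‖x k l‖₊ : ENNReal) else 0

/-- The seminorm on `H_p`: `Σ kl|Δx| + lim_N sup_{k,l≥N} |x_{k,l}|`
(the limit written as a limsup, which agrees with the limit whenever it exists). -/
def hpSemi (x : DSeq) : ℝ :=
  hNorm x + (Filter.limsup (supTail x) atTop).toReal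

/-- The element `d^{(k,l)}` of the determining set. -/
def dkl (k l : ℕ) : DSeq :=
  fun i j => if i ≤ k ∧ j ≤ l then (1 / (((k : ℂ) + 1) * ((l : ℂ) + 1))) else 0

/-- Finitely supported double sequences (the set `φ`). -/
def FinSupp (x : DSeq) : Prop :=
  ∃ M : ℕ, ∀ k l : ℕ, (M ≤ k ∨ M ≤ l) → x k l = 0

/-- A 4D matrix `B` belongs to the class `(X, Y)`: for every `x ∈ X` the rectangular
partial sums of every row are bounded and Pringsheim convergent, and the resulting
double sequence of limits `Bx` belongs to `Y`. -/
def MatDom (B : ℕ → ℕ → DSeq) (X Y : Set DSeq) : Prop :=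
  ∀ x ∈ X, ∃ y ∈ Y, ∀ m n : ℕ, BPConv (pSum (B m n) x) (y m n)

/-- The associated 4D matrix `E`, `e_{m,n,k,l} = (1/(kl)) Σ_{i≤k,j≤l} a_{m,n,i,j}`. -/
def Emat (A : ℕ → ℕ → DSeq) (m n : ℕ) : DSeq :=
  fun k l => (1 / (((k : ℂ) + 1) * ((l : ℂ) + 1))) * rectSum (A m n) k l

/-- The difference `Δ^{11}_{mn}` applied to the first pair of indices of a 4D matrix. -/
def d11 (A : ℕ → ℕ → DSeq) (m n k l : ℕ) : ℂ :=
  A m n k l - A (m + 1) n k l - A m (n + 1) k l + A (m + 1) (n + 1) k l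


namespace St2Aux

def wgt (p : ℕ × ℕ) : ℝ := (((p.1 + 1) * (p.2 + 1) : ℕ) : ℝ)

lemma one_le_wgt (p : ℕ × ℕ) : (1 : ℝ) ≤ wgt p := by
  have h : 1 ≤ (p.1 + 1) * (p.2 + 1) := Nat.one_le_iff_ne_zero.mpr (by positivity)
  unfold wgt
  exact_mod_cast h

lemma wgt_nonneg (p : ℕ × ℕ) : (0 : ℝ) ≤ wgt p := zero_le_one.trans (one_le_wgt p)

lemma hNorm_eq (x : DSeq) :
    hNorm x = ∑' p : ℕ × ℕ, wgt p * ‖dDiff x p.1 p.2‖ := rfl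

lemma hNorm_nonneg (x : DSeq) : 0 ≤ hNorm x :=
  tsum_nonneg fun p => mul_nonneg (wgt_nonneg p) (norm_nonneg _)


lemma dDiff_sub (x y : DSeq) (k l : ℕ) :
    dDiff (x - y) k l = dDiff x k l - dDiff y k l := by
  simp only [dDiff, Pi.sub_apply]; ring

lemma dDiff_add (x y : DSeq) (k l : ℕ) :
    dDiff (x + y) k l = dDiff x k l + dDiff y k l := by
  simp only [dDiff, Pi.add_apply]; ring

lemma dDiff_smul (c : ℂ) (x : DSeq) (k l : ℕ) :
    dDiff (c • x) k l = c * dDiff x k l := by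
  simp only [dDiff, Pi.smul_apply, smul_eq_mul]; ring

lemma hahnSummable_def (x : DSeq) :
    HahnSummable x ↔ Summable (fun p : ℕ × ℕ => wgt p * ‖dDiff x p.1 p.2‖) :=
  Iff.rfl

lemma HahnSummable_add {x y : DSeq} (hx : HahnSummable x) (hy : HahnSummable y) :
    HahnSummable (x + y) := by
  rw [hahnSummable_def] at hx hy ⊢
  refine Summable.of_nonneg_of_le (fun p => mul_nonneg (wgt_nonneg p) (norm_nonneg _)) (fun p => ?_) (hx.add hy)
  rw [dDiff_add, ← mul_add]
  refine mul_le_mul_of_nonneg_left ?_ (wgt_nonneg p)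
  simpa using norm_add_le (dDiff x p.1 p.2) (dDiff y p.1 p.2)

lemma HahnSummable_sub {x y : DSeq} (hx : HahnSummable x) (hy : HahnSummable y) :
    HahnSummable (x - y) := by
  rw [hahnSummable_def] at hx hy ⊢
  refine Summable.of_nonneg_of_le (fun p => mul_nonneg (wgt_nonneg p) (norm_nonneg _)) (fun p => ?_) (hx.add hy)
  rw [dDiff_sub, ← mul_add]
  refine mul_le_mul_of_nonneg_left ?_ (wgt_nonneg p)
  simpa using norm_sub_le (dDiff x p.1 p.2) (dDiff y p.1 p.2)

lemma PConv_add {x y : DSeq} (hx : PConv x 0) (hy : PConv y 0) : PConv (x + y) 0 := by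
  intro ε hε
  obtain ⟨N1, h1⟩ := hx (ε / 2) (by linarith)
  obtain ⟨N2, h2⟩ := hy (ε / 2) (by linarith)
  refine ⟨max N1 N2, fun k hk l hl => ?_⟩
  have hx' := h1 k (le_trans (le_max_left _ _) hk) l (le_trans (le_max_left _ _) hl)
  have hy' := h2 k (le_trans (le_max_right _ _) hk) l (le_trans (le_max_right _ _) hl)
  rw [sub_zero] at hx' hy' ⊢
  calc ‖(x + y) k l‖ = ‖x k l + y k l‖ := rfl
    _ ≤ ‖x k l‖ + ‖y k l‖ := by
        simpa using norm_add_le (x k l) (y k l)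
    _ < ε := by linarith

lemma PConv_sub {x y : DSeq} (hx : PConv x 0) (hy : PConv y 0) : PConv (x - y) 0 := by
  intro ε hε
  obtain ⟨N1, h1⟩ := hx (ε / 2) (by linarith)
  obtain ⟨N2, h2⟩ := hy (ε / 2) (by linarith)
  refine ⟨max N1 N2, fun k hk l hl => ?_⟩
  have hx' := h1 k (le_trans (le_max_left _ _) hk) l (le_trans (le_max_left _ _) hl)
  have hy' := h2 k (le_trans (le_max_right _ _) hk) l (le_trans (le_max_right _ _) hl)
  rw [sub_zero] at hx' hy' ⊢
  calc ‖(x - y) k l‖ = ‖x k l - y k l‖ := rfl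
    _ ≤ ‖x k l‖ + ‖y k l‖ := by
        simpa using norm_sub_le (x k l) (y k l)
    _ < ε := by linarith

lemma PConv_smul (c : ℂ) {x : DSeq} (hx : PConv x 0) : PConv (c • x) 0 := by
  intro ε hε
  obtain ⟨N, hN⟩ := hx (ε / (‖c‖ + 1)) (by positivity)
  refine ⟨N, fun k hk l hl => ?_⟩
  have h := hN k hk l hl
  rw [sub_zero] at h ⊢
  have habs : ‖(c • x) k l‖ = ‖c‖ * ‖x k l‖ := by
    simp [Pi.smul_apply, smul_eq_mul, map_mul]
  rw [habs]
  calc ‖c‖ * ‖x k l‖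
      ≤ ‖c‖ * (ε / (‖c‖ + 1)) :=
        mul_le_mul_of_nonneg_left h.le (norm_nonneg c)
    _ < (‖c‖ + 1) * (ε / (‖c‖ + 1)) := by
        apply mul_lt_mul_of_pos_right (by linarith) (by positivity)
    _ = ε := by field_simp

lemma supTail_tendsto_zero {x : DSeq} (hx : PConv x 0) :
    Tendsto (supTail x) atTop (nhds 0) := by
  rw [ENNReal.tendsto_atTop_zero]
  intro ε hε
  obtain ⟨r, hr0, hrε⟩ : ∃ r : ℝ, 0 < r ∧ ENNReal.ofReal r ≤ ε := by
    rcases eq_or_ne ε ⊤ with h | h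
    · exact ⟨1, one_pos, by simp [h]⟩
    · exact ⟨ε.toReal, ENNReal.toReal_pos hε.ne' h, by rw [ENNReal.ofReal_toReal h]⟩
  obtain ⟨N, hN⟩ := hx r hr0
  refine ⟨N, fun n hn => ?_⟩
  refine le_trans (iSup_le fun k => iSup_le fun l => ?_) hrε
  split_ifs with h
  · have hkl := hN k (le_trans hn h.1) l (le_trans hn h.2)
    rw [sub_zero] at hkl
    rw [← ENNReal.ofReal_coe_nnreal, coe_nnnorm]
    exact ENNReal.ofReal_le_ofReal (hkl.le)
  · exact zero_le

lemma hpSemi_eq_hNorm {x : DSeq} (hx : PConv x 0) : hpSemi x = hNorm x := by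
  unfold hpSemi
  rw [(supTail_tendsto_zero hx).limsup_eq]
  simp

lemma hNorm_le_hpSemi (x : DSeq) : hNorm x ≤ hpSemi x :=
  le_add_of_nonneg_right ENNReal.toReal_nonneg

lemma hpSemi_nonneg (x : DSeq) : 0 ≤ hpSemi x :=
  add_nonneg (hNorm_nonneg x) ENNReal.toReal_nonneg

lemma hNorm_smul (c : ℂ) (x : DSeq) : hNorm (c • x) = ‖c‖ * hNorm x := by
  rw [hNorm_eq, hNorm_eq, ← tsum_mul_left]
  congr 1
  funext p
  rw [dDiff_smul, norm_mul]
  ring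

lemma hNorm_add_le {x y : DSeq} (hx : HahnSummable x) (hy : HahnSummable y) :
    hNorm (x + y) ≤ hNorm x + hNorm y := by
  rw [hahnSummable_def] at hx hy
  rw [hNorm_eq, hNorm_eq, hNorm_eq, ← Summable.tsum_add hx hy]
  refine Summable.tsum_le_tsum (fun p => ?_) (HahnSummable_add hx hy) (hx.add hy)
  rw [dDiff_add, ← mul_add]
  refine mul_le_mul_of_nonneg_left ?_ (wgt_nonneg p)
  simpa using norm_add_le (dDiff x p.1 p.2) (dDiff y p.1 p.2)

lemma Hahn_p_mem {x : DSeq} : x ∈ Hahn Theta.p ↔ HahnSummable x ∧ PConv x 0 := Iff.rfl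

lemma Hahn_p_sub {x y : DSeq} (hx : x ∈ Hahn Theta.p) (hy : y ∈ Hahn Theta.p) :
    x - y ∈ Hahn Theta.p :=
  ⟨HahnSummable_sub hx.1 hy.1, PConv_sub hx.2 hy.2⟩

/-- Double tail sums of an absolutely summable family. -/
def tSum (a : ℕ × ℕ → ℂ) : DSeq :=
  fun k l => ∑' p : ℕ × ℕ, if k ≤ p.1 ∧ l ≤ p.2 then a p else 0

lemma summable_ite {a : ℕ × ℕ → ℂ} (ha : Summable fun p => ‖a p‖)
    (P : ℕ × ℕ → Prop) [DecidablePred P] :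
    Summable (fun p => if P p then a p else 0) := by
  refine Summable.of_norm_bounded ha (fun p => ?_)
  split_ifs
  · simp
  · simpa using norm_nonneg (a p)

lemma summable_ite_abs {a : ℕ × ℕ → ℂ} (ha : Summable fun p => ‖a p‖)
    (P : ℕ × ℕ → Prop) [DecidablePred P] :
    Summable (fun p => if P p then ‖a p‖ else 0) := by
  refine Summable.of_nonneg_of_le (fun p => ?_) (fun p => ?_) ha
  · split_ifs
    · exact norm_nonneg _
    · exact le_rfl
  · split_ifs
    · exact le_rfl
    · exact norm_nonneg _

lemma dDiff_tSum {a : ℕ × ℕ → ℂ} (ha : Summable fun p => ‖a p‖) (k l : ℕ) :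
    dDiff (tSum a) k l = a (k, l) := by
  have hs1 := summable_ite ha (fun p => k ≤ p.1 ∧ l ≤ p.2)
  have hs2 := summable_ite ha (fun p => k + 1 ≤ p.1 ∧ l ≤ p.2)
  have hs3 := summable_ite ha (fun p => k ≤ p.1 ∧ l + 1 ≤ p.2)
  have hs4 := summable_ite ha (fun p => k + 1 ≤ p.1 ∧ l + 1 ≤ p.2)
  have hcomb : dDiff (tSum a) k l = ∑' p : ℕ × ℕ,
      ((if k ≤ p.1 ∧ l ≤ p.2 then a p else 0) - (if k + 1 ≤ p.1 ∧ l ≤ p.2 then a p else 0)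
        - (if k ≤ p.1 ∧ l + 1 ≤ p.2 then a p else 0)
        + (if k + 1 ≤ p.1 ∧ l + 1 ≤ p.2 then a p else 0)) := by
    unfold dDiff tSum
    rw [← Summable.tsum_sub hs1 hs2, ← Summable.tsum_sub (hs1.sub hs2) hs3,
      ← Summable.tsum_add ((hs1.sub hs2).sub hs3) hs4]
  rw [hcomb]
  have hpt : ∀ p : ℕ × ℕ,
      ((if k ≤ p.1 ∧ l ≤ p.2 then a p else 0) - (if k + 1 ≤ p.1 ∧ l ≤ p.2 then a p else 0)
        - (if k ≤ p.1 ∧ l + 1 ≤ p.2 then a p else 0)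
        + (if k + 1 ≤ p.1 ∧ l + 1 ≤ p.2 then a p else 0))
      = (if p = (k, l) then a (k, l) else 0) := by
    rintro ⟨i, j⟩
    simp only [Prod.mk.injEq]
    by_cases h : i = k ∧ j = l
    · obtain ⟨rfl, rfl⟩ := h
      rw [if_pos ⟨le_rfl, le_rfl⟩, if_neg (by omega), if_neg (by omega), if_neg (by omega),
        if_pos ⟨rfl, rfl⟩]
      ring
    · rw [if_neg h]
      split_ifs <;> first | ring1 | (exfalso; omega)
  rw [tsum_congr hpt]; simp

lemma pconv_tSum {a : ℕ × ℕ → ℂ} (ha : Summable fun p : ℕ × ℕ => ‖a p‖) :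
    PConv (tSum a) 0 := by
  intro ε hε
  have hv := tendsto_tsum_compl_atTop_zero (fun p : ℕ × ℕ => ‖a p‖)
  obtain ⟨s, hs⟩ := (hv.eventually (gt_mem_nhds hε)).exists
  refine ⟨(s.sup fun p => max p.1 p.2) + 1, fun k hk l hl => ?_⟩
  rw [sub_zero]
  have h1 : ‖tSum a k l‖
      ≤ ∑' p : ℕ × ℕ, (if k ≤ p.1 ∧ l ≤ p.2 then ‖a p‖ else 0) := by
    refine le_trans (norm_tsum_le_tsum_norm ?_) (le_of_eq (tsum_congr fun p => ?_))
    · refine Summable.of_nonneg_of_le (fun p => norm_nonneg _) (fun p => ?_) ha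
      split_ifs
      · simp
      · simpa using norm_nonneg (a p)
    · split_ifs
      · simp
      · simp
  have h2 : (∑' p : ℕ × ℕ, (if k ≤ p.1 ∧ l ≤ p.2 then ‖a p‖ else 0))
      ≤ ∑' p : ℕ × ℕ, (if p ∉ s then ‖a p‖ else 0) := by
    refine Summable.tsum_le_tsum (fun p => ?_) (summable_ite_abs ha _) (summable_ite_abs ha _)
    by_cases hcond : k ≤ p.1 ∧ l ≤ p.2
    · rw [if_pos hcond, if_pos ?_]
      intro hps
      have h3 : p.1 ≤ s.sup fun q => max q.1 q.2 :=
        le_trans (le_max_left _ _) (Finset.le_sup (f := fun q : ℕ × ℕ => max q.1 q.2) hps)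
      omega
    · rw [if_neg hcond]
      split_ifs <;> first | exact norm_nonneg _ | exact le_rfl
  have h4 : (∑' p : ℕ × ℕ, (if p ∉ s then ‖a p‖ else 0))
      = ∑' p : ℕ × ℕ, Set.indicator {x : ℕ × ℕ | x ∉ s} (fun q => ‖a q‖) p :=
    tsum_congr fun p => by by_cases hp : p ∉ s <;> simp [Set.indicator_apply, hp]
  have h3 := (tsum_subtype ({x : ℕ × ℕ | x ∉ s}) (fun q => ‖a q‖)).symm
  exact lt_of_le_of_lt (h1.trans (h2.trans_eq (h4.trans h3))) hs

end St2Aux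

open St2Aux in
/-- on `H_p` the expression `Σ kl|Δx| + lim_N sup_{k,l≥N}|x_{k,l}|` is a
well-defined finite seminorm (the limit exists and is finite), and `H_p` is complete
with respect to this seminorm. -/
theorem statement_2 :
    (∀ x ∈ Hahn Theta.p, ∃ L : NNReal, Tendsto (supTail x) atTop (nhds (L : ENNReal))) ∧
    (∀ x ∈ Hahn Theta.p, 0 ≤ hpSemi x) ∧
    (∀ (c : ℂ), ∀ x ∈ Hahn Theta.p, hpSemi (c • x) = ‖c‖ * hpSemi x) ∧
    (∀ x ∈ Hahn Theta.p, ∀ y ∈ Hahn Theta.p, hpSemi (x + y) ≤ hpSemi x + hpSemi y) ∧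
    (∀ u : ℕ → DSeq, (∀ i, u i ∈ Hahn Theta.p) →
      (∀ ε > (0 : ℝ), ∃ N : ℕ, ∀ i ≥ N, ∀ j ≥ N, hpSemi (u i - u j) < ε) →
      ∃ x ∈ Hahn Theta.p, Tendsto (fun i => hpSemi (u i - x)) atTop (nhds 0)) := by
  refine ⟨?_, ?_, ?_, ?_, ?_⟩
  · intro x hx
    exact ⟨0, by simpa using supTail_tendsto_zero hx.2⟩
  · intro x _
    exact hpSemi_nonneg x
  · intro c x hx
    rw [hpSemi_eq_hNorm (PConv_smul c hx.2), hpSemi_eq_hNorm hx.2, hNorm_smul]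
  · intro x hx y hy
    rw [hpSemi_eq_hNorm (PConv_add hx.2 hy.2), hpSemi_eq_hNorm hx.2, hpSemi_eq_hNorm hy.2]
    exact hNorm_add_le hx.1 hy.1
  · intro u hu hc
    have hmem : ∀ i j, HahnSummable (u i - u j) := fun i j =>
      HahnSummable_sub (hu i).1 (hu j).1
    have hkey : ∀ i j (p : ℕ × ℕ),
        ‖dDiff (u i) p.1 p.2 - dDiff (u j) p.1 p.2‖ ≤ hpSemi (u i - u j) := by
      intro i j p
      have h1 : ‖dDiff (u i - u j) p.1 p.2‖
          ≤ wgt p * ‖dDiff (u i - u j) p.1 p.2‖ :=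
        le_mul_of_one_le_left (norm_nonneg _) (one_le_wgt p)
      have h2 : wgt p * ‖dDiff (u i - u j) p.1 p.2‖ ≤ hNorm (u i - u j) := by
        rw [hNorm_eq]
        exact Summable.le_tsum ((hahnSummable_def _).mp (hmem i j)) p
          (fun q _ => mul_nonneg (wgt_nonneg q) (norm_nonneg _))
      calc ‖dDiff (u i) p.1 p.2 - dDiff (u j) p.1 p.2‖
          = ‖dDiff (u i - u j) p.1 p.2‖ := by rw [dDiff_sub]
        _ ≤ _ := le_trans h1 (le_trans h2 (hNorm_le_hpSemi _))
    have hCauchyPt : ∀ p : ℕ × ℕ, ∃ L : ℂ,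
        Tendsto (fun i => dDiff (u i) p.1 p.2) atTop (nhds L) := by
      intro p
      have hcs : CauchySeq (fun i => dDiff (u i) p.1 p.2) := by
        rw [Metric.cauchySeq_iff]
        intro ε hε
        obtain ⟨N, hN⟩ := hc ε hε
        refine ⟨N, fun i hi j hj => ?_⟩
        rw [Complex.dist_eq]
        exact lt_of_le_of_lt (hkey i j p) (hN i hi j hj)
      exact cauchySeq_tendsto_of_complete hcs
    choose a ha using hCauchyPt
    have hB : ∀ ε > (0 : ℝ), ∃ N, ∀ i ≥ N, ∀ F : Finset (ℕ × ℕ),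
        ∑ p ∈ F, wgt p * ‖dDiff (u i) p.1 p.2 - a p‖ ≤ ε := by
      intro ε hε
      obtain ⟨N, hN⟩ := hc ε hε
      refine ⟨N, fun i hi F => ?_⟩
      have hlim : Tendsto
          (fun j => ∑ p ∈ F, wgt p * ‖dDiff (u i) p.1 p.2 - dDiff (u j) p.1 p.2‖)
          atTop (nhds (∑ p ∈ F, wgt p * ‖dDiff (u i) p.1 p.2 - a p‖)) := by
        refine tendsto_finset_sum F (fun p _ => Tendsto.const_mul _ ?_)
        exact (continuous_norm.tendsto _).comp (tendsto_const_nhds.sub (ha p))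
      refine le_of_tendsto hlim ?_
      filter_upwards [eventually_ge_atTop N] with j hj
      have hstep : ∑ p ∈ F, wgt p * ‖dDiff (u i) p.1 p.2 - dDiff (u j) p.1 p.2‖
          ≤ hNorm (u i - u j) := by
        rw [hNorm_eq]
        refine le_trans (le_of_eq (Finset.sum_congr rfl fun p _ => by rw [← dDiff_sub])) ?_
        exact Summable.sum_le_tsum F (fun q _ => mul_nonneg (wgt_nonneg q) (norm_nonneg _))
          ((hahnSummable_def _).mp (hmem i j))
      exact hstep.trans (le_trans (hNorm_le_hpSemi _) (hN i hi j hj).le)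
    obtain ⟨N₀, hN₀⟩ := hB 1 one_pos
    have hsum0 : Summable (fun p : ℕ × ℕ =>
        wgt p * ‖dDiff (u N₀) p.1 p.2 - a p‖) :=
      summable_of_sum_le (fun p => mul_nonneg (wgt_nonneg p) (norm_nonneg _)) (fun F => hN₀ N₀ le_rfl F)
    have hsuma : Summable (fun p : ℕ × ℕ => wgt p * ‖a p‖) := by
      refine Summable.of_nonneg_of_le (fun p => mul_nonneg (wgt_nonneg p) (norm_nonneg _)) (fun p => ?_)
        (hsum0.add ((hahnSummable_def _).mp (hu N₀).1))
      rw [← mul_add]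
      refine mul_le_mul_of_nonneg_left ?_ (wgt_nonneg p)
      have heq : ‖a p‖
          = ‖(dDiff (u N₀) p.1 p.2 - a p) - dDiff (u N₀) p.1 p.2‖ := by
        rw [show (dDiff (u N₀) p.1 p.2 - a p) - dDiff (u N₀) p.1 p.2 = -(a p) from by ring,
          norm_neg]
      rw [heq]
      refine le_trans (norm_sub_le _ _) ?_
      exact le_rfl
    have hsuma' : Summable (fun p : ℕ × ℕ => ‖a p‖) :=
      Summable.of_nonneg_of_le (fun p => norm_nonneg _)
        (fun p => le_mul_of_one_le_left (norm_nonneg _) (one_le_wgt p)) hsuma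
    set x : DSeq := tSum a with hxdef
    have hΔx : ∀ k l, dDiff x k l = a (k, l) := dDiff_tSum hsuma'
    have hxmem : x ∈ Hahn Theta.p := by
      refine ⟨?_, pconv_tSum hsuma'⟩
      rw [hahnSummable_def]
      have hfun : (fun p : ℕ × ℕ => wgt p * ‖dDiff x p.1 p.2‖)
          = fun p => wgt p * ‖a p‖ := by
        funext p
        rw [hΔx]
      rw [hfun]
      exact hsuma
    refine ⟨x, hxmem, ?_⟩
    have hconv : ∀ ε > (0 : ℝ), ∃ N, ∀ i ≥ N, hpSemi (u i - x) ≤ ε := by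
      intro ε hε
      obtain ⟨N, hN⟩ := hB ε hε
      refine ⟨N, fun i hi => ?_⟩
      have hmemix : u i - x ∈ Hahn Theta.p := Hahn_p_sub (hu i) hxmem
      rw [hpSemi_eq_hNorm hmemix.2]
      have hsummi : Summable (fun p : ℕ × ℕ =>
          wgt p * ‖dDiff (u i) p.1 p.2 - a p‖) :=
        summable_of_sum_le (fun p => mul_nonneg (wgt_nonneg p) (norm_nonneg _)) (hN i hi)
      have hEq : hNorm (u i - x) = ∑' p : ℕ × ℕ,
          wgt p * ‖dDiff (u i) p.1 p.2 - a p‖ := by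
        rw [hNorm_eq]
        refine tsum_congr fun p => ?_
        rw [dDiff_sub, hΔx]
      rw [hEq]
      exact Summable.tsum_le_of_sum_le hsummi (hN i hi)
    rw [Metric.tendsto_atTop]
    intro ε hε
    obtain ⟨N, hN⟩ := hconv (ε / 2) (by linarith)
    refine ⟨N, fun i hi => ?_⟩
    rw [Real.dist_eq, sub_zero, abs_of_nonneg (hpSemi_nonneg _)]
    linarith [hN i hi]
end
end

section
/- For every ϑ ∈ {p, bp, r}, the inclusion H_ϑ ⊆ BV_{ϑ0} holds and is strict: every x ∈ H_ϑ lies in BV ∩ C_{ϑ0}, while the double sequence x defined by x_{1,l} = 1/l for all l ≥ 1 and x_{k,l} = 0 for all k ≥ 2 belongs to BV_{ϑ0} but not to H_ϑ. -/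
open Filter Topology

noncomputable section

/-- The double sequence with first row `1/l` and all other rows `0`. -/
def xFive : DSeq := fun k l => if k = 0 then 1 / ((l : ℂ) + 1) else 0

lemma abs_dDiff_xFive (k l : ℕ) :
    ‖dDiff xFive k l‖
      = if k = 0 then 1 / (((l:ℝ)+1)*((l:ℝ)+2)) else 0 := by
  rcases k with _ | k
  · have h : dDiff xFive 0 l = ((1 / (((l:ℝ)+1)*((l:ℝ)+2)) : ℝ) : ℂ) := by
      simp only [dDiff, xFive]
      push_cast
      have h1 : ((l:ℂ)+1) ≠ 0 := by
        intro h; have := congrArg Complex.re h; simp at this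
        nlinarith [Nat.cast_nonneg (α := ℝ) l]
      have h2 : ((l:ℂ)+1+1) ≠ 0 := by
        intro h; have := congrArg Complex.re h; simp at this
        nlinarith [Nat.cast_nonneg (α := ℝ) l]
      have h3 : (((l:ℂ)+1)*((l:ℂ)+2)) ≠ 0 := by
        apply mul_ne_zero h1; rw [show ((l:ℂ)+2) = (l:ℂ)+1+1 by ring]; exact h2
      field_simp
      rw [show ((l:ℂ)+2) = (l:ℂ)+1+1 by ring, div_self h2]; ring
    rw [h, Complex.norm_real, Real.norm_eq_abs, if_pos rfl, abs_of_nonneg (by positivity)]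
  · simp [dDiff, xFive]

lemma inj_row : Function.Injective (fun l : ℕ => ((0, l) : ℕ × ℕ)) := by
  intro a b h; simpa using h

lemma summable_aux : Summable (fun l : ℕ => 1 / (((l:ℝ)+1)*((l:ℝ)+2))) := by
  have hb : Summable (fun l : ℕ => 1 / ((l:ℝ)+1)^2) := by
    have := Real.summable_one_div_nat_pow.mpr (le_refl 2)
    have h2 := (summable_nat_add_iff 1).mpr this
    apply h2.congr
    intro n; push_cast; ring
  apply Summable.of_nonneg_of_le (fun l => by positivity) (fun l => ?_) hb
  have h1 : (0:ℝ) < (l:ℝ)+1 := by positivity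
  have h2 : ((l:ℝ)+1) ≤ ((l:ℝ)+2) := by linarith
  rw [div_le_div_iff₀ (by positivity) (by positivity)]
  nlinarith

lemma not_summable_aux : ¬ Summable (fun l : ℕ => 1 / ((l:ℝ)+2)) := by
  intro h
  apply Real.not_summable_one_div_natCast
  have := (summable_nat_add_iff (f := fun n : ℕ => 1 / (n:ℝ)) 2).mp ?_
  · exact this
  · apply h.congr; intro n; push_cast; ring

lemma xFive_bv : xFive ∈ BVset := by
  rw [BVset, Set.mem_setOf_eq,
    ← Function.Injective.summable_iff inj_row (f := fun kl : ℕ × ℕ =>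
      ‖dDiff xFive kl.1 kl.2‖)]
  · apply summable_aux.congr
    intro l
    simp [abs_dDiff_xFive]
  · rintro ⟨k, l⟩ hx
    rcases k with _ | k
    · exact absurd ⟨l, rfl⟩ hx
    · simp [abs_dDiff_xFive]

lemma xFive_pconv : PConv xFive 0 := by
  intro ε hε
  refine ⟨1, fun k hk l _ => ?_⟩
  have hk0 : k ≠ 0 := by omega
  simp [xFive, hk0, hε]

lemma xFive_bounded : DBounded xFive := by
  refine ⟨1, fun k l => ?_⟩
  rcases k with _ | k
  · have : ‖xFive 0 l‖ = 1 / ((l:ℝ)+1) := by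
      have : xFive 0 l = ((1 / ((l:ℝ)+1) : ℝ) : ℂ) := by
        simp [xFive]
      rw [this, Complex.norm_real, Real.norm_eq_abs, abs_of_nonneg (by positivity)]
    rw [this]
    rw [div_le_one (by positivity)]
    linarith [Nat.cast_nonneg (α := ℝ) l]
  · simp [xFive]

lemma xFive_row_tendsto (k : ℕ) :
    Tendsto (fun l => xFive k l) atTop (nhds 0) := by
  rcases k with _ | k
  · have h : Tendsto (fun l : ℕ => 1 / ((l:ℝ)+1)) atTop (nhds 0) :=
      tendsto_one_div_add_atTop_nhds_zero_nat
    have := (Complex.continuous_ofReal.tendsto 0).comp h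
    apply this.congr
    intro l
    simp [xFive, Function.comp]
  · simpa [xFive] using tendsto_const_nhds (x := (0:ℂ)) (f := (atTop : Filter ℕ))

lemma xFive_col_tendsto (l : ℕ) :
    Tendsto (fun k => xFive k l) atTop (nhds 0) := by
  apply Tendsto.congr' _ (tendsto_const_nhds (x := (0:ℂ)))
  filter_upwards [Filter.eventually_ge_atTop 1] with k hk
  have : k ≠ 0 := by omega
  simp [xFive, this]

lemma xFive_thconv (θ : Theta) : ThConv θ xFive 0 := by
  cases θ
  · exact xFive_pconv
  · exact ⟨xFive_pconv, xFive_bounded⟩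
  · exact ⟨xFive_pconv, fun k => ⟨0, xFive_row_tendsto k⟩,
      fun l => ⟨0, xFive_col_tendsto l⟩⟩

lemma xFive_not_hahnSummable : ¬ HahnSummable xFive := by
  intro h
  apply not_summable_aux
  have h2 := h.comp_injective inj_row
  apply h2.congr
  intro l
  simp only [Function.comp, abs_dDiff_xFive, if_pos rfl]
  push_cast
  have h1 : (0:ℝ) < (l:ℝ)+1 := by positivity
  field_simp

/-- `H_ϑ ⊆ BV_{ϑ0}` strictly; the sequence `x_{1,l} = 1/l`, `x_{k,l} = 0`
for `k ≥ 2` lies in `BV_{ϑ0} \ H_ϑ`. -/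
theorem statement_5 (θ : Theta) :
    Hahn θ ⊆ (BVset ∩ {x | ThConv θ x 0}) ∧
    xFive ∈ BVset ∧ ThConv θ xFive 0 ∧ xFive ∉ Hahn θ := by
  refine ⟨fun x hx => ⟨?_, hx.2⟩, xFive_bv, xFive_thconv θ, fun hx => xFive_not_hahnSummable hx.1⟩
  have hs := hx.1
  apply Summable.of_nonneg_of_le (fun kl => norm_nonneg _) (fun kl => ?_) hs
  have h1 : (1:ℝ) ≤ (((kl.1 + 1) * (kl.2 + 1) : ℕ) : ℝ) := by
    have : 1 ≤ (kl.1 + 1) * (kl.2 + 1) := Nat.one_le_iff_ne_zero.mpr (by positivity)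
    exact_mod_cast this
  exact le_mul_of_one_le_left (norm_nonneg _) h1
end
end

section
/- For every ϑ ∈ {p, bp, r}, the set E = {d^{(k,l)} : k,l ≥ 1} is a determining set for H_ϑ, where d^{(k,l)} ∈ Ω is defined by d^{(k,l)}_{i,j} = 1/(kl) for 1 ≤ i ≤ k and 1 ≤ j ≤ l, and d^{(k,l)}_{i,j} = 0 otherwise. Precisely: a finitely supported double sequence x satisfies ‖x‖_H = Σ_{k,l} kl|Δx_{k,l}| ≤ 1 if and only if x belongs to the absolutely convex hull of E, i.e., x = Σ_{k≤m, l≤n} z_{k,l} d^{(k,l)} for some m,n and complex coefficients z_{k,l} with Σ_{k≤m, l≤n} |z_{k,l}| ≤ 1. -/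
open Filter Topology

noncomputable section

lemma telescope' (f : ℕ → ℂ) (i M : ℕ) (h : i ≤ M) :
    ∑ k ∈ Finset.Ico i M, (f k - f (k+1)) = f i - f M := by
  rw [Finset.sum_Ico_eq_sub _ h, Finset.sum_range_sub', Finset.sum_range_sub']
  ring

lemma double_telescope (x : DSeq) (i j M N : ℕ) (hi : i ≤ M) (hj : j ≤ N) :
    ∑ k ∈ Finset.Ico i M, ∑ l ∈ Finset.Ico j N, dDiff x k l
      = x i j - x M j - x i N + x M N := by
  have inner : ∀ k, ∑ l ∈ Finset.Ico j N, dDiff x k l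
      = (fun k => x k j - x k N) k - (fun k => x k j - x k N) (k+1) := by
    intro k
    have h := telescope' (fun l => x k l - x (k+1) l) j N hj
    calc ∑ l ∈ Finset.Ico j N, dDiff x k l
        = ∑ l ∈ Finset.Ico j N,
            ((fun l => x k l - x (k+1) l) l - (fun l => x k l - x (k+1) l) (l+1)) := by
          refine Finset.sum_congr rfl fun l _ => ?_
          simp only [dDiff]; ring
      _ = _ := by rw [h]; ring
  rw [Finset.sum_congr rfl fun k _ => inner k, telescope' _ i M hi]
  ring

lemma sum_ite_Ico (g : ℕ → ℂ) (i N : ℕ) :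
    ∑ k ∈ Finset.range N, (if i ≤ k then g k else 0) = ∑ k ∈ Finset.Ico i N, g k := by
  rw [← Finset.sum_filter]
  congr 1
  ext k
  simp only [Finset.mem_filter, Finset.mem_range, Finset.mem_Ico]
  omega

lemma sum_ite_rect (d : ℕ → ℕ → ℂ) (i j N : ℕ) :
    ∑ k ∈ Finset.range N, ∑ l ∈ Finset.range N, (if i ≤ k ∧ j ≤ l then d k l else 0)
      = ∑ k ∈ Finset.Ico i N, ∑ l ∈ Finset.Ico j N, d k l := by
  rw [← sum_ite_Ico (fun k => ∑ l ∈ Finset.Ico j N, d k l) i N]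
  refine Finset.sum_congr rfl fun k _ => ?_
  by_cases hik : i ≤ k
  · simp only [hik, true_and, if_true]
    exact sum_ite_Ico (d k) j N
  · simp [hik]

lemma sum_ite_pair (f : ℕ → ℕ → ℂ) (i j m n : ℕ) :
    ∑ k ∈ Finset.range (m+1), ∑ l ∈ Finset.range (n+1),
      (if i = k ∧ j = l then f k l else 0)
    = if i ≤ m ∧ j ≤ n then f i j else 0 := by
  have inner : ∀ k, ∑ l ∈ Finset.range (n+1), (if i = k ∧ j = l then f k l else 0)
      = if i = k then (if j ≤ n then f k j else 0) else 0 := by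
    intro k
    by_cases hik : i = k
    · simp only [hik, true_and, if_true]
      rw [Finset.sum_ite_eq]
      simp [Nat.lt_succ_iff]
    · simp [hik]
  rw [Finset.sum_congr rfl fun k _ => inner k, Finset.sum_ite_eq]
  simp [Finset.mem_range, Nat.lt_succ_iff, ite_and]

lemma dDiff_dkl (k l i j : ℕ) :
    dDiff (dkl k l) i j =
      if i = k ∧ j = l then 1 / (((k : ℂ) + 1) * ((l : ℂ) + 1)) else 0 := by
  unfold dDiff dkl
  split_ifs <;> (try (exfalso; omega)) <;> ring

lemma dDiff_vanish {x : DSeq} {M : ℕ} (hM : ∀ k l : ℕ, (M ≤ k ∨ M ≤ l) → x k l = 0)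
    {k l : ℕ} (h : M ≤ k ∨ M ≤ l) : dDiff x k l = 0 := by
  rcases h with h | h
  · rw [dDiff, hM k l (Or.inl h), hM (k+1) l (Or.inl (by omega)),
      hM k (l+1) (Or.inl h), hM (k+1) (l+1) (Or.inl (by omega))]
    ring
  · rw [dDiff, hM k l (Or.inr h), hM (k+1) l (Or.inr h),
      hM k (l+1) (Or.inr (by omega)), hM (k+1) (l+1) (Or.inr (by omega))]
    ring

lemma hNorm_eq_sum {x : DSeq} {m n : ℕ}
    (h0 : ∀ k l : ℕ, (m+1 ≤ k ∨ n+1 ≤ l) → dDiff x k l = 0) :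
    hNorm x = ∑ k ∈ Finset.range (m+1), ∑ l ∈ Finset.range (n+1),
      (((k+1)*(l+1) : ℕ) : ℝ) * ‖dDiff x k l‖ := by
  rw [hNorm, tsum_eq_sum (s := Finset.range (m+1) ×ˢ Finset.range (n+1)) ?_,
    Finset.sum_product]
  intro kl hkl
  simp only [Finset.mem_product, Finset.mem_range] at hkl
  rw [h0 kl.1 kl.2 (by omega)]
  simp

/-- `E = {d^{(k,l)}}` is a determining set for `H_ϑ`: a finitely
supported double sequence `x` satisfies `‖x‖_H ≤ 1` iff it lies in the absolutely
convex hull of `E`. -/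
theorem statement_16 (θ : Theta) (x : DSeq) (hx : FinSupp x) :
    hNorm x ≤ 1 ↔
      ∃ (m n : ℕ) (z : ℕ → ℕ → ℂ),
        (∑ k ∈ Finset.range (m + 1), ∑ l ∈ Finset.range (n + 1),
          ‖z k l‖) ≤ 1 ∧
        x = ∑ k ∈ Finset.range (m + 1), ∑ l ∈ Finset.range (n + 1),
          z k l • dkl k l := by
  obtain ⟨M, hM⟩ := hx
  have h0 : ∀ k l : ℕ, (M+1 ≤ k ∨ M+1 ≤ l) → dDiff x k l = 0 := by
    intro k l h
    exact dDiff_vanish hM (by omega)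
  constructor
  · intro h
    refine ⟨M, M, fun k l => (((k+1)*(l+1) : ℕ) : ℂ) * dDiff x k l, ?_, ?_⟩
    · calc ∑ k ∈ Finset.range (M+1), ∑ l ∈ Finset.range (M+1),
            ‖(((k+1)*(l+1):ℕ):ℂ) * dDiff x k l‖
          = ∑ k ∈ Finset.range (M+1), ∑ l ∈ Finset.range (M+1),
            (((k+1)*(l+1):ℕ):ℝ) * ‖dDiff x k l‖ := by
            refine Finset.sum_congr rfl fun k _ => Finset.sum_congr rfl fun l _ => ?_
            rw [norm_mul, Complex.norm_natCast]
        _ = hNorm x := (hNorm_eq_sum fun k l hh => dDiff_vanish hM (by omega)).symm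
        _ ≤ 1 := h
    · funext i j
      have happ : (∑ k ∈ Finset.range (M+1), ∑ l ∈ Finset.range (M+1),
          (fun k l => (((k+1)*(l+1) : ℕ) : ℂ) * dDiff x k l) k l • dkl k l) i j
          = ∑ k ∈ Finset.range (M+1), ∑ l ∈ Finset.range (M+1),
            (((k+1)*(l+1) : ℕ) : ℂ) * dDiff x k l * dkl k l i j := by
        simp [Finset.sum_apply, smul_eq_mul]
      rw [happ]
      have hterm : ∀ k l : ℕ, (((k+1)*(l+1):ℕ):ℂ) * dDiff x k l * dkl k l i j
          = if i ≤ k ∧ j ≤ l then dDiff x k l else 0 := by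
        intro k l
        rw [dkl]
        by_cases hc : i ≤ k ∧ j ≤ l
        · simp only [hc, and_self, if_true]
          have hk : ((k:ℂ)+1) ≠ 0 := Nat.cast_add_one_ne_zero k
          have hl : ((l:ℂ)+1) ≠ 0 := Nat.cast_add_one_ne_zero l
          push_cast
          field_simp
        · simp [hc]
      rw [Finset.sum_congr rfl fun k _ => Finset.sum_congr rfl fun l _ => hterm k l,
        sum_ite_rect (fun k l => dDiff x k l) i j (M+1)]
      by_cases hi : i ≤ M+1
      · by_cases hj : j ≤ M+1
        · rw [double_telescope x i j (M+1) (M+1) hi hj,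
            hM (M+1) j (Or.inl (by omega)), hM i (M+1) (Or.inr (by omega)),
            hM (M+1) (M+1) (Or.inl (by omega))]
          ring
        · rw [hM i j (Or.inr (by omega))]
          rw [Finset.Ico_eq_empty (by omega : ¬ j < M+1)]
          simp
      · rw [hM i j (Or.inl (by omega))]
        rw [Finset.Ico_eq_empty (by omega : ¬ i < M+1)]
        simp
  · rintro ⟨m, n, z, hz, hrep⟩
    have happly : ∀ i j : ℕ, x i j
        = ∑ k ∈ Finset.range (m+1), ∑ l ∈ Finset.range (n+1), z k l * dkl k l i j := by
      intro i j
      rw [hrep]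
      simp [Finset.sum_apply, smul_eq_mul]
    have hdd : ∀ i j : ℕ, dDiff x i j
        = if i ≤ m ∧ j ≤ n then z i j * (1 / (((i:ℂ)+1)*((j:ℂ)+1))) else 0 := by
      intro i j
      have step1 : dDiff x i j = ∑ k ∈ Finset.range (m+1), ∑ l ∈ Finset.range (n+1),
          z k l * dDiff (dkl k l) i j := by
        simp only [dDiff, happly, ← Finset.sum_sub_distrib, ← Finset.sum_add_distrib]
        refine Finset.sum_congr rfl fun k _ => Finset.sum_congr rfl fun l _ => ?_
        ring
      rw [step1,
        Finset.sum_congr rfl fun k _ => Finset.sum_congr rfl fun l _ => by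
          rw [dDiff_dkl, mul_ite, mul_zero],
        sum_ite_pair (fun k l => z k l * (1 / (((k:ℂ)+1)*((l:ℂ)+1)))) i j m n]
    have h0' : ∀ k l : ℕ, (m+1 ≤ k ∨ n+1 ≤ l) → dDiff x k l = 0 := by
      intro k l h
      rw [hdd]
      have : ¬ (k ≤ m ∧ l ≤ n) := by omega
      simp [this]
    rw [hNorm_eq_sum h0']
    have hterm : ∀ k l : ℕ, k ≤ m → l ≤ n →
        (((k+1)*(l+1):ℕ):ℝ) * ‖dDiff x k l‖ = ‖z k l‖ := by
      intro k l hk hl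
      rw [hdd k l, if_pos ⟨hk, hl⟩, norm_mul, norm_div, norm_one, norm_mul]
      have e1 : ((k:ℂ)+1) = ((k+1 : ℕ) : ℂ) := by push_cast; ring
      have e2 : ((l:ℂ)+1) = ((l+1 : ℕ) : ℂ) := by push_cast; ring
      rw [e1, e2, Complex.norm_natCast, Complex.norm_natCast]
      have hk0 : ((k+1:ℕ):ℝ) ≠ 0 := by positivity
      have hl0 : ((l+1:ℕ):ℝ) ≠ 0 := by positivity
      push_cast
      field_simp
    calc ∑ k ∈ Finset.range (m+1), ∑ l ∈ Finset.range (n+1),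
          (((k+1)*(l+1):ℕ):ℝ) * ‖dDiff x k l‖
        = ∑ k ∈ Finset.range (m+1), ∑ l ∈ Finset.range (n+1), ‖z k l‖ := by
          refine Finset.sum_congr rfl fun k hk => Finset.sum_congr rfl fun l hl => ?_
          simp only [Finset.mem_range, Nat.lt_succ_iff] at hk hl
          exact hterm k l hk hl
      _ ≤ 1 := hz
end
end

section
/- Let ϑ ∈ {p, bp, r}, let A = (a_{m,n,k,l}) be a 4D complex matrix, and define the 4D matrix F by f_{m,n,k,l} = mn(a_{m,n,k,l} − a_{m+1,n,k,l} − a_{m,n+1,k,l} + a_{m+1,n+1,k,l}). If x ∈ Ω is such that for all m,n the series (Ax)_{m,n} = Σ_{k,l} a_{m,n,k,l} x_{k,l} exists (its rectangular partial sums are bounded and Pringsheim convergent), then for all m,n the series (Fx)_{m,n} = Σ_{k,l} f_{m,n,k,l} x_{k,l} also exists and equals mn·Δ^{11}(Ax)_{m,n} = mn((Ax)_{m,n} − (Ax)_{m+1,n} − (Ax)_{m,n+1} + (Ax)_{m+1,n+1}); consequently Ax ∈ H_ϑ if and only if Fx ∈ L_u and Ax is ϑ-convergent to 0. -/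
open Filter Topology

noncomputable section

lemma pconv_iff (x : DSeq) (L : ℂ) :
    PConv x L ↔ Tendsto (fun p : ℕ × ℕ => x p.1 p.2) atTop (nhds L) := by
  rw [Metric.tendsto_atTop]
  constructor
  · intro h ε hε
    obtain ⟨N, hN⟩ := h ε hε
    exact ⟨(N, N), fun p hp => by simpa [Complex.dist_eq] using hN p.1 hp.1 p.2 hp.2⟩
  · intro h ε hε
    obtain ⟨N, hN⟩ := h ε hε
    refine ⟨max N.1 N.2, fun k hk l hl => ?_⟩
    simpa [Complex.dist_eq] using
      hN (k, l) ⟨le_trans (le_max_left _ _) hk, le_trans (le_max_right _ _) hl⟩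

lemma bpconv_comb {s1 s2 s3 s4 : DSeq} {L1 L2 L3 L4 : ℂ} (c : ℂ)
    (h1 : BPConv s1 L1) (h2 : BPConv s2 L2) (h3 : BPConv s3 L3) (h4 : BPConv s4 L4) :
    BPConv (fun k l => c * (s1 k l - s2 k l - s3 k l + s4 k l))
      (c * (L1 - L2 - L3 + L4)) := by
  obtain ⟨p1, M1, hM1⟩ := h1
  obtain ⟨p2, M2, hM2⟩ := h2
  obtain ⟨p3, M3, hM3⟩ := h3
  obtain ⟨p4, M4, hM4⟩ := h4
  constructor
  · rw [pconv_iff] at *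
    exact ((((p1.sub p2).sub p3).add p4).const_mul c)
  · refine ⟨‖c‖ * (M1 + M2 + M3 + M4), fun k l => ?_⟩
    rw [norm_mul]
    refine mul_le_mul_of_nonneg_left ?_ (norm_nonneg c)
    have tri : ∀ u v : ℂ, ‖u - v‖ ≤ ‖u‖ + ‖v‖ := fun u v => by
      simpa [sub_eq_add_neg] using norm_add_le u (-v)
    calc ‖s1 k l - s2 k l - s3 k l + s4 k l‖
        ≤ ‖s1 k l - s2 k l - s3 k l‖ + ‖s4 k l‖ :=
          norm_add_le _ _
      _ ≤ ‖s1 k l - s2 k l‖ + ‖s3 k l‖ + ‖s4 k l‖ := by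
          gcongr
          exact tri _ _
      _ ≤ ‖s1 k l‖ + ‖s2 k l‖ + ‖s3 k l‖
            + ‖s4 k l‖ := by
          gcongr
          exact tri _ _
      _ ≤ M1 + M2 + M3 + M4 := by
          gcongr
          · exact hM1 _ _
          · exact hM2 _ _
          · exact hM3 _ _
          · exact hM4 _ _

lemma pSum_comb (A : ℕ → ℕ → DSeq) (x : DSeq) (c : ℂ) (m n M N : ℕ) :
    pSum (fun k l => c * d11 A m n k l) x M N =
      c * (pSum (A m n) x M N - pSum (A (m + 1) n) x M N
        - pSum (A m (n + 1)) x M N + pSum (A (m + 1) (n + 1)) x M N) := by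
  simp only [pSum, d11, Finset.mul_sum, ← Finset.sum_sub_distrib, ← Finset.sum_add_distrib]
  refine Finset.sum_congr rfl fun k _ => Finset.sum_congr rfl fun l _ => ?_
  ring

/-- with `f_{m,n,k,l} = mn Δ^{11}_{mn} a_{m,n,k,l}`, whenever all the
series `(Ax)_{m,n}` exist (bounded Pringsheim-convergent partial sums, with values
`y m n`), the series `(Fx)_{m,n}` also exist and equal `mn·Δ^{11}(Ax)_{m,n}`;
consequently `Ax ∈ H_ϑ` iff `Fx ∈ L_u` and `Ax` is ϑ-convergent to `0`. -/
theorem statement_18 (θ : Theta) (A : ℕ → ℕ → DSeq) (x y : DSeq)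
    (hy : ∀ m n : ℕ, BPConv (pSum (A m n) x) (y m n)) :
    (∀ m n : ℕ,
      BPConv (pSum (fun k l => ((((m + 1) * (n + 1) : ℕ)) : ℂ) * d11 A m n k l) x)
        (((((m + 1) * (n + 1) : ℕ)) : ℂ) * dDiff y m n)) ∧
    (y ∈ Hahn θ ↔
      ((fun m n => ((((m + 1) * (n + 1) : ℕ)) : ℂ) * dDiff y m n) ∈ Lu ∧
        ThConv θ y 0)) := by

  constructor
  · intro m n
    have h := bpconv_comb ((((m + 1) * (n + 1) : ℕ)) : ℂ)
      (hy m n) (hy (m + 1) n) (hy m (n + 1)) (hy (m + 1) (n + 1))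
    have he : (fun k l => pSum (fun k l => ((((m + 1) * (n + 1) : ℕ)) : ℂ) * d11 A m n k l) x k l)
        = fun k l => ((((m + 1) * (n + 1) : ℕ)) : ℂ) *
          (pSum (A m n) x k l - pSum (A (m + 1) n) x k l
            - pSum (A m (n + 1)) x k l + pSum (A (m + 1) (n + 1)) x k l) := by
      funext k l; exact pSum_comb A x _ m n k l
    rw [show (pSum (fun k l => ((((m + 1) * (n + 1) : ℕ)) : ℂ) * d11 A m n k l) x) = _ from he]
    exact h
  · have hfun : (fun kl : ℕ × ℕ =>
        ‖((((kl.1 + 1) * (kl.2 + 1) : ℕ)) : ℂ) * dDiff y kl.1 kl.2‖)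
        = fun kl : ℕ × ℕ =>
          (((kl.1 + 1) * (kl.2 + 1) : ℕ) : ℝ) * ‖dDiff y kl.1 kl.2‖ := by
      funext kl; rw [norm_mul, Complex.norm_natCast]
    simp only [Hahn, HahnSummable, Lu, Set.mem_setOf_eq, hfun]
end
end
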